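/- Let 𝓕 = {[0), [1)} and let End*(B_ω^𝓕) = {γ_k : k ≥ 1} ∪ {δ_k : k ≥ 1} be the semigroup of non-injective non-annihilating monoid endomorphisms of B_ω^𝓕 under composition. Then End*(B_ω^𝓕) is isomorphic to the direct product LZ₂ × (ℕ⁺, ·), where LZ₂ is the two-element left-zero semigroup and (ℕ⁺, ·) is the multiplicative semigroup of positive integers. -/

import Mathlib

/-- `[a) = {x ∈ ω : x ≥ a}`. -/
def seg (a : ℕ) : Set ℕ := {x | a ≤ x}

/-- `n + F` taken within `ω`: `{x ∈ ω : x = n + k for some k ∈ F}`. -/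
def shift (n : ℤ) (F : Set ℕ) : Set ℕ := {x | ∃ k ∈ F, (x : ℤ) = n + k}

/-- The carrier `B_ω × 𝒫(ω)`. -/
abbrev BF := ℕ × ℕ × Set ℕ

/-- The multiplication on `B_ω × 𝒫(ω)`. -/
def bfMul (x y : BF) : BF :=
  if x.2.1 ≤ y.1 then
    (x.1 + (y.1 - x.2.1), y.2.1, shift ((x.2.1 : ℤ) - y.1) x.2.2 ∩ y.2.2)
  else
    (x.1, (x.2.1 - y.1) + y.2.1, x.2.2 ∩ shift ((y.1 : ℤ) - x.2.1) y.2.2)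

/-- The family `𝓕 = {[0), [1)}`. -/
def Fam : Set (Set ℕ) := {seg 0, seg 1}

/-- The carrier of the monoid `B_ω^𝓕` for `𝓕 = {[0),[1)}`. -/
def Dom : Set BF := {x | x.2.2 ∈ Fam}

/-- The map `γ_k`. -/
def gam (k : ℕ) : BF → BF := fun x => (k * x.1, k * x.2.1, seg 0)

open Classical

/-- The map `δ_k`. -/
noncomputable def del (k : ℕ) : BF → BF := fun x =>
  if x.2.2 = seg 1 then (k * (x.1 + 1), k * (x.2.1 + 1), seg 0)
  else (k * x.1, k * x.2.1, seg 0)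

/-- `e` is a monoid endomorphism of `B_ω^𝓕` for `𝓕 = {[0),[1)}`. -/
def IsMonEnd (e : BF → BF) : Prop :=
  (∀ x ∈ Dom, e x ∈ Dom) ∧
  e (0, 0, seg 0) = (0, 0, seg 0) ∧
  ∀ x ∈ Dom, ∀ y ∈ Dom, e (bfMul x y) = bfMul (e x) (e y)

lemma seg0_ne_seg1 : seg 0 ≠ seg 1 := by
  intro h
  have h0 : (0:ℕ) ∈ seg 0 := by simp [seg]
  rw [h] at h0
  simp [seg] at h0

lemma gam_eval (k : ℕ) : gam k (1, 0, seg 0) = (k, 0, seg 0) := by simp [gam]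

lemma del_eval (k : ℕ) : del k (1, 0, seg 0) = (k, 0, seg 0) := by
  simp [del, seg0_ne_seg1]

lemma gam_ne_del (k k' : ℕ) (hk' : 0 < k') : gam k ≠ del k' := by
  intro h
  have := congrArg (fun f => (f (0, 0, seg 1)).1) h
  simp [gam, del] at this
  omega

lemma comp_gam_gam (k₁ k₂ : ℕ) : (fun x => gam k₂ (gam k₁ x)) = gam (k₁ * k₂) := by
  funext x; simp [gam]; constructor <;> ring

lemma comp_gam_del (k₁ k₂ : ℕ) : (fun x => del k₂ (gam k₁ x)) = gam (k₁ * k₂) := by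
  funext x; simp [gam, del, seg0_ne_seg1]; constructor <;> ring

lemma comp_del_gam (k₁ k₂ : ℕ) : (fun x => gam k₂ (del k₁ x)) = del (k₁ * k₂) := by
  funext x
  by_cases h : x.2.2 = seg 1 <;> simp [gam, del, h] <;> constructor <;> ring

lemma comp_del_del (k₁ k₂ : ℕ) : (fun x => del k₂ (del k₁ x)) = del (k₁ * k₂) := by
  funext x
  by_cases h : x.2.2 = seg 1 <;> simp [gam, del, h, seg0_ne_seg1] <;> constructor <;> ring

noncomputable def phi (f : BF → BF) : Bool × ℕ+ :=
  (if ∃ k : ℕ, 0 < k ∧ f = del k then true else false,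
   ⟨max (f (1, 0, seg 0)).1 1, by positivity⟩)

lemma phi_gam (k : ℕ) (hk : 0 < k) : phi (gam k) = (false, ⟨k, hk⟩) := by
  have h : ¬ ∃ k' : ℕ, 0 < k' ∧ gam k = del k' := by
    rintro ⟨k', hk', h⟩; exact gam_ne_del k k' hk' h
  simp [phi, h, gam_eval, Nat.max_eq_left hk]

lemma phi_del (k : ℕ) (hk : 0 < k) : phi (del k) = (true, ⟨k, hk⟩) := by
  have h : ∃ k' : ℕ, 0 < k' ∧ del k = del k' := ⟨k, hk, rfl⟩
  simp [phi, h, del_eval, Nat.max_eq_left hk]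

/-- The semigroup `End*(B_ω^𝓕) = {γ_k : k ≥ 1} ∪ {δ_k : k ≥ 1}` under left-to-right
composition is isomorphic to the direct product of the two-element left-zero semigroup
and the multiplicative semigroup of positive integers. -/
theorem stmt13 :
    ∃ φ : (BF → BF) → Bool × ℕ+,
      Set.BijOn φ {f | ∃ k : ℕ, 0 < k ∧ (f = gam k ∨ f = del k)} Set.univ ∧
      ∀ f ∈ {f : BF → BF | ∃ k : ℕ, 0 < k ∧ (f = gam k ∨ f = del k)},
        ∀ g ∈ {f : BF → BF | ∃ k : ℕ, 0 < k ∧ (f = gam k ∨ f = del k)},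
          φ (fun x => g (f x)) = ((φ f).1, (φ f).2 * (φ g).2) := by
  refine ⟨phi, ⟨fun f _ => trivial, ?_, ?_⟩, ?_⟩
  · rintro f ⟨k, hk, hf | hf⟩ g ⟨m, hm, hg | hg⟩ h <;> subst hf <;> subst hg
    · rw [phi_gam k hk, phi_gam m hm] at h
      obtain ⟨-, h2⟩ := Prod.mk.injEq .. ▸ h
      rw [show k = m from congrArg PNat.val h2]
    · rw [phi_gam k hk, phi_del m hm] at h; exact absurd (congrArg Prod.fst h) Bool.false_ne_true
    · rw [phi_del k hk, phi_gam m hm] at h; exact absurd (congrArg Prod.fst h) Bool.false_ne_true.symm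
    · rw [phi_del k hk, phi_del m hm] at h
      obtain ⟨-, h2⟩ := Prod.mk.injEq .. ▸ h
      rw [show k = m from congrArg PNat.val h2]
  · rintro ⟨b, n⟩ -
    cases b
    · exact ⟨gam n, ⟨n, n.pos, Or.inl rfl⟩, by rw [phi_gam n n.pos]; rfl⟩
    · exact ⟨del n, ⟨n, n.pos, Or.inr rfl⟩, by rw [phi_del n n.pos]; rfl⟩
  · rintro f ⟨k, hk, hf | hf⟩ g ⟨m, hm, hg | hg⟩ <;> subst hf <;> subst hg
    · rw [comp_gam_gam, phi_gam _ (Nat.mul_pos hk hm), phi_gam k hk, phi_gam m hm]; rfl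
    · rw [comp_gam_del, phi_gam _ (Nat.mul_pos hk hm), phi_gam k hk, phi_del m hm]; rfl
    · rw [comp_del_gam, phi_del _ (Nat.mul_pos hk hm), phi_del k hk, phi_gam m hm]; rfl
    · rw [comp_del_del, phi_del _ (Nat.mul_pos hk hm), phi_del k hk, phi_del m hm]; rfl
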